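/- Let K be a field of characteristic 2, b a regular symmetric bilinear form on a finite-dimensional K-vector space V, and u ∈ GL(V) a b-isometry with u − id nilpotent. Then for every positive integer k, the rank of (u − id)^{2k} is even. -/

import Mathlib

open Module LinearMap

/-- An alternating bilinear form on a finite dimensional space has even rank. -/
theorem alt_rank_even {K : Type*} [Field K] :
    ∀ (n : ℕ) (V : Type*) [AddCommGroup V] [Module K V] [FiniteDimensional K V],
      Module.finrank K V = n →
      ∀ C : V →ₗ[K] V →ₗ[K] K, (∀ x, C x x = 0) →
      Even (Module.finrank K V - Module.finrank K (LinearMap.ker C)) := by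
  intro n
  induction n using Nat.strong_induction_on with
  | _ n ih =>
  intro V _ _ _ hn C halt
  by_cases hC : C = 0
  · subst hC
    rw [LinearMap.ker_zero, finrank_top]
    simp
  · have hxy : ∃ x y, C x y ≠ 0 := by
      by_contra h
      push_neg at h
      exact hC (by ext a b; simp [h])
    obtain ⟨x, y, hc⟩ := hxy
    have hskew : ∀ a b, C a b = -C b a := by
      intro a b
      have h := halt (a + b)
      simp only [map_add, LinearMap.add_apply, halt a, halt b, zero_add, add_zero] at h
      rw [add_comm] at h
      exact eq_neg_of_add_eq_zero_left h
    have hyx : C y x ≠ 0 := by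
      rw [hskew y x]
      simpa using hc
    set φ : V →ₗ[K] K × K := (C x).prod (C y) with hφ
    have hφapp : ∀ v, φ v = (C x v, C y v) := fun v => rfl
    have hWmem : ∀ v, v ∈ LinearMap.ker φ ↔ C x v = 0 ∧ C y v = 0 := by
      intro v
      rw [LinearMap.mem_ker, hφapp, Prod.mk_eq_zero]
    have hsurj : Function.Surjective φ := by
      intro p
      refine ⟨(p.1 / C x y) • y + (p.2 / C y x) • x, ?_⟩
      rw [hφapp]
      have h1 : C x ((p.1 / C x y) • y + (p.2 / C y x) • x)
          = (p.1 / C x y) * C x y + (p.2 / C y x) * C x x := by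
        simp [map_add, map_smul]
      have h2 : C y ((p.1 / C x y) • y + (p.2 / C y x) • x)
          = (p.1 / C x y) * C y y + (p.2 / C y x) * C y x := by
        simp [map_add, map_smul]
      rw [h1, h2, halt x, halt y]
      field_simp
      ext <;> simp [hc, hyx]
    set W := LinearMap.ker φ with hW
    have hrank : 2 + Module.finrank K W = Module.finrank K V := by
      have h := LinearMap.finrank_range_add_finrank_ker φ
      rw [LinearMap.range_eq_top.mpr hsurj, finrank_top] at h
      simpa using h
    have hker_le : LinearMap.ker C ≤ W := by
      intro v hv
      rw [LinearMap.mem_ker] at hv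
      rw [hWmem]
      constructor
      · rw [hskew x v, hv]; simp
      · rw [hskew y v, hv]; simp
    have hdecomp : ∀ v : V, ∃ (a b : K) (w : V), w ∈ W ∧ v = a • x + b • y + w := by
      intro v
      refine ⟨C y v / C y x, C x v / C x y,
        v - (C y v / C y x) • x - (C x v / C x y) • y, ?_, by abel⟩
      rw [hWmem]
      constructor
      · simp only [map_sub, map_smul, smul_eq_mul, halt x]
        field_simp
        ring
      · simp only [map_sub, map_smul, smul_eq_mul, halt y]
        field_simp
        ring
    set C' := C.domRestrict₁₂ W W with hC'
    have halt' : ∀ w : W, C' w w = 0 := fun w => halt w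
    have hkerC' : LinearMap.ker C' = (LinearMap.ker C).comap W.subtype := by
      ext w
      simp only [LinearMap.mem_ker, Submodule.mem_comap, Submodule.coe_subtype]
      constructor
      · intro h
        have hmem := (hWmem (w : V)).mp w.2
        have hwx : C (w : V) x = 0 := by rw [hskew, hmem.1, neg_zero]
        have hwy : C (w : V) y = 0 := by rw [hskew, hmem.2, neg_zero]
        ext v
        obtain ⟨a, b, w', hw', hv⟩ := hdecomp v
        have hww' : C (w : V) w' = 0 := by
          have := congrFun (congrArg (fun f => f.toFun) h) ⟨w', hw'⟩
          exact this
        rw [hv]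
        simp [map_add, map_smul, hwx, hwy, hww']
      · intro h
        ext w'
        show C (w : V) (w' : V) = 0
        rw [h]
        simp
    have hfr' : Module.finrank K (LinearMap.ker C') = Module.finrank K (LinearMap.ker C) := by
      rw [hkerC']
      exact (Submodule.comapSubtypeEquivOfLe hker_le).finrank_eq
    have hle : Module.finrank K (LinearMap.ker C) ≤ Module.finrank K W :=
      Submodule.finrank_mono hker_le
    obtain ⟨m, hm⟩ := ih (Module.finrank K W) (by omega) W rfl C' halt'
    exact ⟨m + 1, by omega⟩

theorem rank_even_of_symmetric_unipotent_char_two {K V : Type*} [Field K] [CharP K 2]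
    [AddCommGroup V] [Module K V] [FiniteDimensional K V]
    (B : V →ₗ[K] V →ₗ[K] K)
    (hsymm : ∀ x y, B x y = B y x)
    (hreg : B.Nondegenerate)
    (u : V ≃ₗ[K] V)
    (hiso : ∀ x y, B (u x) (u y) = B x y)
    (hnil : IsNilpotent ((u : V →ₗ[K] V) - LinearMap.id)) :
    ∀ k : ℕ, 0 < k → Even (Module.finrank K
      (LinearMap.range (((u : V →ₗ[K] V) - LinearMap.id) ^ (2 * k)))) := by
  intro k hk
  set N : V →ₗ[K] V := (u : V →ₗ[K] V) - LinearMap.id with hN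
  set us : V →ₗ[K] V := (u.symm : V →ₗ[K] V) with hus
  have h2 : (2 : K) = 0 := CharTwo.two_eq_zero
  have hNapp : ∀ v, N v = u v - v := by
    intro v
    simp [hN, LinearMap.sub_apply]
  have husapp : ∀ v, us v = u.symm v := fun v => rfl
  -- commutation of N and us
  have hc : Commute us N := by
    apply LinearMap.ext
    intro v
    simp only [Module.End.mul_apply, hNapp, husapp, map_sub,
      LinearEquiv.symm_apply_apply, LinearEquiv.apply_symm_apply]
  -- adjoint relation
  have hadj : ∀ z w, B (N z) (u w) = B z (N w) := by
    intro z w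
    have e1 : B (u z) (u w) = B z w := hiso z w
    rw [hNapp z, hNapp w, map_sub, LinearMap.sub_apply, map_sub, e1]
    linear_combination (B z w - B z (u w)) * h2
  have hadj' : ∀ z w, B (N z) w = B z (N (us w)) := by
    intro z w
    have := hadj z (u.symm w)
    rwa [LinearEquiv.apply_symm_apply] at this
  -- powers
  have hadjpow : ∀ (m : ℕ) (z w : V), B ((N ^ m) z) w = B z (((N * us) ^ m) w) := by
    intro m
    induction m with
    | zero => intro z w; simp
    | succ m ihm =>
      intro z w
      have h1 : (N ^ (m + 1)) z = (N ^ m) (N z) := by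
        rw [pow_succ]
        rfl
      rw [h1, ihm (N z) w, hadj' z (((N * us) ^ m) w)]
      have h3 : ((N * us) ^ (m + 1)) w = N (us (((N * us) ^ m) w)) := by
        rw [pow_succ']
        rfl
      rw [h3]
  -- B (N y) (N y) = 0
  have hBNN : ∀ Y, B (N Y) (N Y) = 0 := by
    intro Y
    rw [hNapp Y]
    simp only [map_sub, LinearMap.sub_apply]
    rw [hiso Y Y, hsymm Y (u Y)]
    linear_combination (B Y Y - B (u Y) Y) * h2
  set A : V →ₗ[K] V := N ^ (2 * k) * us ^ k with hA
  -- the alternating property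
  have haltA : ∀ v, B (A v) v = 0 := by
    intro v
    have hXdef : A v = (N ^ k) (((N ^ k) * (us ^ k)) v) := by
      rw [hA]
      have : N ^ (2 * k) * us ^ k = N ^ k * (N ^ k * us ^ k) := by
        rw [← mul_assoc, ← pow_add, two_mul]
      rw [this]
      rfl
    set X := ((N ^ k) * (us ^ k)) v with hX
    have h5 : ((N * us) ^ k) v = X := by
      rw [(hc.symm).mul_pow]
    rw [hXdef, hadjpow k X v, h5]
    obtain ⟨j, rfl⟩ : ∃ j, k = j + 1 := ⟨k - 1, by omega⟩
    have h6 : X = N (((N ^ j) * (us ^ (j + 1))) v) := by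
      rw [hX]
      have : N ^ (j + 1) * us ^ (j + 1) = N * (N ^ j * us ^ (j + 1)) := by
        rw [← mul_assoc, ← pow_succ']
      rw [this]
      rfl
    rw [h6]
    exact hBNN _
  -- kernels
  have hkerC : LinearMap.ker (B ∘ₗ A) = LinearMap.ker A := by
    ext v
    simp only [LinearMap.mem_ker, LinearMap.comp_apply]
    constructor
    · intro h
      exact hreg.1 (A v) fun w => by rw [h]; simp
    · intro h
      rw [h, map_zero]
  have husinj : Function.Injective ⇑(us ^ k) := by
    have : ⇑(us ^ k) = (⇑us)^[k] := by
      funext v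
      exact Module.End.pow_apply us k v
    rw [this]
    exact Function.Injective.iterate (fun a b hab => by
      simpa [husapp] using congrArg u (by simpa [husapp] using hab)) k
  have hkerA : LinearMap.ker A = LinearMap.ker (N ^ (2 * k)) := by
    have hcomm2 : A = us ^ k * N ^ (2 * k) := by
      rw [hA, (hc.pow_pow k (2 * k)).eq]
    ext v
    simp only [LinearMap.mem_ker]
    constructor
    · intro h
      have : (us ^ k) ((N ^ (2 * k)) v) = 0 := by
        rw [← Module.End.mul_apply, ← hcomm2]
        exact h
      have := husinj (a₂ := 0) (by simpa using this)
      exact this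
    · intro h
      rw [hcomm2, Module.End.mul_apply, h, map_zero]
  -- conclude
  have heven := alt_rank_even (Module.finrank K V) V rfl (B ∘ₗ A)
    (fun v => by simpa [LinearMap.comp_apply] using haltA v)
  rw [hkerC, hkerA] at heven
  obtain ⟨m, hm⟩ := heven
  have hrn := LinearMap.finrank_range_add_finrank_ker (N ^ (2 * k))
  exact ⟨m, by omega⟩
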